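/- Let g be a Lie algebra over a field K of characteristic zero and κ an invariant symmetric bilinear form on g. Then the vector space (g ⊗ K[z,z^{-1}]) ⊕ K, with bracket determined on generators by [(x⊗f, s), (y⊗g, t)] = ([x,y] ⊗ f·g, κ(x,y)·Res(f·g')), is a Lie algebra: the bracket is alternating and satisfies the Jacobi identity. -/

import Mathlib

open TensorProduct

/-- The residue of a Laurent polynomial: the coefficient of `z⁻¹`. -/
noncomputable def lpRes {K : Type*} [Field K] (f : LaurentPolynomial K) : K :=
  (AddMonoidAlgebra.coeff f : ℤ →₀ K) (-1)

/-- The formal derivative of a Laurent polynomial: `∑ aₙ zⁿ ↦ ∑ n aₙ zⁿ⁻¹`. -/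
noncomputable def lpDeriv {K : Type*} [Field K] (f : LaurentPolynomial K) :
    LaurentPolynomial K :=
  AddMonoidAlgebra.ofCoeff <|
  (AddMonoidAlgebra.coeff f : ℤ →₀ K).sum fun n a => (Finsupp.single (n - 1) (n • a) : ℤ →₀ K)

/-- The formal derivative of Laurent polynomials, as a `K`-linear map. -/
noncomputable def lpDerivL (K : Type*) [Field K] :
    LaurentPolynomial K →ₗ[K] LaurentPolynomial K :=
  (AddMonoidAlgebra.coeffLinearEquiv K).symm.toLinearMap ∘ₗ
  (Finsupp.lsum K fun n : ℤ => (n : K) • Finsupp.lsingle (n - 1) :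
    (ℤ →₀ K) →ₗ[K] (ℤ →₀ K)) ∘ₗ (AddMonoidAlgebra.coeffLinearEquiv K).toLinearMap

/-- The residue of Laurent polynomials, as a `K`-linear map. -/
noncomputable def lpResL (K : Type*) [Field K] : LaurentPolynomial K →ₗ[K] K :=
  (Finsupp.lapply (-1) : (ℤ →₀ K) →ₗ[K] K) ∘ₗ (AddMonoidAlgebra.coeffLinearEquiv K).toLinearMap

/-- The bilinear form `(f, g) ↦ Res(f · g')` on Laurent polynomials. -/
noncomputable def resPairing (K : Type*) [Field K] :
    LinearMap.BilinForm K (LaurentPolynomial K) :=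
  ((LinearMap.mul K (LaurentPolynomial K)).compr₂ (lpResL K)).compl₂ (lpDerivL K)

/-- The bracket of the affine Kac–Moody algebra `(𝔤 ⊗ K[z,z⁻¹]) ⊕ K`:
`[(u, s), (v, t)] = ([u, v], c(u, v))` where `c` is the bilinear extension of
`c(x ⊗ f, y ⊗ g) = κ(x,y)·Res(f·g')` and the loop algebra bracket is the
bilinear extension of `[x ⊗ f, y ⊗ g] = [x,y] ⊗ fg`. -/
noncomputable def affineBracket {K : Type*} [Field K] {𝔤 : Type*} [LieRing 𝔤]
    [LieAlgebra K 𝔤] (κ : LinearMap.BilinForm K 𝔤)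
    (p q : (LaurentPolynomial K ⊗[K] 𝔤) × K) :
    (LaurentPolynomial K ⊗[K] 𝔤) × K :=
  (⁅p.1, q.1⁆, LinearMap.BilinForm.tmul (resPairing K) κ p.1 q.1)

section Aux

variable {K : Type*} [Field K]

lemma lpDerivL_single (n : ℤ) (a : K) :
    lpDerivL K (AddMonoidAlgebra.single n a) = (n : K) • (AddMonoidAlgebra.single (n-1) a : LaurentPolynomial K) := by
  show (AddMonoidAlgebra.coeffLinearEquiv K).symm (Finsupp.lsum K _ (Finsupp.single n a)) = _
  rw [Finsupp.lsum_single]; rfl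

lemma lpDeriv_eq_lpDerivL (f : LaurentPolynomial K) : lpDeriv f = lpDerivL K f := by
  induction f using AddMonoidAlgebra.induction_linear with
  | zero => simp [lpDeriv]
  | add f g hf hg =>
    rw [map_add, ← hf, ← hg, lpDeriv, lpDeriv, lpDeriv, AddMonoidAlgebra.coeff_add,
      Finsupp.sum_add_index (by simp) (by intros; rw [smul_add, Finsupp.single_add]),
      AddMonoidAlgebra.ofCoeff_add]
  | single n a =>
    rw [lpDeriv, AddMonoidAlgebra.coeff_single, Finsupp.sum_single_index (by simp), lpDerivL_single,
      AddMonoidAlgebra.ofCoeff_single, AddMonoidAlgebra.smul_single, zsmul_eq_mul, smul_eq_mul]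

lemma lpDerivL_mul (f g : LaurentPolynomial K) :
    lpDerivL K (f * g) = f * lpDerivL K g + g * lpDerivL K f := by
  induction f using AddMonoidAlgebra.induction_linear with
  | zero => simp
  | add f₁ f₂ h₁ h₂ => simp only [add_mul, map_add, h₁, h₂, mul_add]; ring
  | single n a =>
    induction g using AddMonoidAlgebra.induction_linear with
    | zero => simp
    | add g₁ g₂ h₁ h₂ => simp only [mul_add, map_add, h₁, h₂]; ring
    | single m b =>
      rw [AddMonoidAlgebra.single_mul_single, lpDerivL_single, lpDerivL_single,
        lpDerivL_single]
      rw [AddMonoidAlgebra.smul_single, AddMonoidAlgebra.smul_single, AddMonoidAlgebra.smul_single,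
        AddMonoidAlgebra.single_mul_single, AddMonoidAlgebra.single_mul_single]
      rw [show n + (m-1) = n+m-1 by ring, show m + (n-1) = n+m-1 by ring,
        ← AddMonoidAlgebra.single_add]
      congr 1
      simp only [zsmul_eq_mul, smul_eq_mul]
      push_cast
      ring

lemma lpResL_deriv (f : LaurentPolynomial K) : lpResL K (lpDerivL K f) = 0 := by
  induction f using AddMonoidAlgebra.induction_linear with
  | zero => simp
  | add f g h₁ h₂ => simp [h₁, h₂]
  | single n a =>
    rw [lpDerivL_single, map_smul]
    show (n : K) • (Finsupp.single (n-1) a : ℤ →₀ K) (-1) = 0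
    rw [Finsupp.single_apply]
    rcases eq_or_ne n 0 with h | h
    · simp [h]
    · rw [if_neg (by omega), smul_zero]

lemma resPairing_apply (f g : LaurentPolynomial K) :
    resPairing K f g = lpResL K (f * lpDerivL K g) := rfl

lemma resPairing_skew (f g : LaurentPolynomial K) :
    resPairing K f g = - resPairing K g f := by
  have h := lpResL_deriv (f * g)
  rw [lpDerivL_mul, map_add] at h
  rw [resPairing_apply, resPairing_apply]
  linear_combination h

lemma resPairing_cyclic (f g h : LaurentPolynomial K) :
    resPairing K (f*g) h + resPairing K (g*h) f + resPairing K (h*f) g = 0 := by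
  have h0 := lpResL_deriv (f * g * h)
  rw [lpDerivL_mul, lpDerivL_mul, mul_add, map_add, map_add] at h0
  rw [resPairing_apply, resPairing_apply, resPairing_apply,
    show (g*h) * lpDerivL K f = h * (g * lpDerivL K f) by ring,
    show (h*f) * lpDerivL K g = h * (f * lpDerivL K g) by ring]
  linear_combination h0

end Aux

/-- The affine Kac–Moody central extension is a Lie algebra.  Given a Lie algebra `𝔤`
over a field `K` of characteristic zero and an invariant symmetric bilinear form `κ`,
the bracket on `(𝔤 ⊗ K[z,z⁻¹]) ⊕ K` determined on generators by
`[(x⊗f, s), (y⊗g, t)] = ([x,y] ⊗ f·g, κ(x,y)·Res(f·g'))`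
is alternating and satisfies the Jacobi identity. -/
theorem affine_kacMoody_is_lieAlgebra {K : Type*} [Field K] [CharZero K]
    {𝔤 : Type*} [LieRing 𝔤] [LieAlgebra K 𝔤] (κ : LinearMap.BilinForm K 𝔤)
    (hsymm : ∀ x y : 𝔤, κ x y = κ y x)
    (hinv : ∀ x y w : 𝔤, κ ⁅x, y⁆ w = κ x ⁅y, w⁆) :
    (∀ (f g : LaurentPolynomial K) (x y : 𝔤) (s t : K),
        affineBracket κ (f ⊗ₜ[K] x, s) (g ⊗ₜ[K] y, t)
          = ((f * g) ⊗ₜ[K] ⁅x, y⁆, κ x y * lpRes (f * lpDeriv g)))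
      ∧ (∀ p : (LaurentPolynomial K ⊗[K] 𝔤) × K, affineBracket κ p p = 0)
      ∧ (∀ p q r : (LaurentPolynomial K ⊗[K] 𝔤) × K,
          affineBracket κ (affineBracket κ p q) r
            + affineBracket κ (affineBracket κ q r) p
            + affineBracket κ (affineBracket κ r p) q = 0) := by
  set C := LinearMap.BilinForm.tmul (resPairing K) κ with hC
  have hCtmul : ∀ (f g : LaurentPolynomial K) (x y : 𝔤),
      C (f ⊗ₜ[K] x) (g ⊗ₜ[K] y) = κ x y * resPairing K f g := by
    intro f g x y
    rw [hC]
    rw [LinearMap.BilinForm.tensorDistrib_tmul, smul_eq_mul]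
  have hskew : ∀ u v : LaurentPolynomial K ⊗[K] 𝔤, C u v = - C v u := by
    intro u v
    induction u using TensorProduct.induction_on with
    | zero => simp [zero_lie, lie_zero]
    | add u₁ u₂ h₁ h₂ => simp only [map_add, LinearMap.add_apply, h₁, h₂]; ring
    | tmul f x =>
      induction v using TensorProduct.induction_on with
      | zero => simp [zero_lie, lie_zero]
      | add v₁ v₂ h₁ h₂ => simp only [map_add, LinearMap.add_apply, h₁, h₂]; ring
      | tmul g y =>
        rw [hCtmul, hCtmul, hsymm x y, resPairing_skew]
        ring
  have hCalt : ∀ u : LaurentPolynomial K ⊗[K] 𝔤, C u u = 0 := by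
    intro u
    have h := hskew u u
    have h2 : (2 : K) * C u u = 0 := by linear_combination h
    rcases mul_eq_zero.mp h2 with h | h
    · exact absurd h two_ne_zero
    · exact h
  have hz1 : ∀ b c : LaurentPolynomial K ⊗[K] 𝔤, C ⁅(0 : LaurentPolynomial K ⊗[K] 𝔤), b⁆ c = 0 := by
    intro b c
    have e : ⁅(0 : LaurentPolynomial K ⊗[K] 𝔤), b⁆ = (0 : LaurentPolynomial K ⊗[K] 𝔤) :=
      zero_lie b
    rw [e, map_zero, LinearMap.zero_apply]
  have hz2 : ∀ a b : LaurentPolynomial K ⊗[K] 𝔤, C ⁅a, b⁆ 0 = 0 := by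
    intro a b; rw [map_zero]
  have hz3 : ∀ a c : LaurentPolynomial K ⊗[K] 𝔤, C ⁅a, (0 : LaurentPolynomial K ⊗[K] 𝔤)⁆ c = 0 := by
    intro a c
    have e : ⁅a, (0 : LaurentPolynomial K ⊗[K] 𝔤)⁆ = (0 : LaurentPolynomial K ⊗[K] 𝔤) :=
      lie_zero a
    rw [e, map_zero, LinearMap.zero_apply]
  have ha1 : ∀ a₁ a₂ b c : LaurentPolynomial K ⊗[K] 𝔤,
      C ⁅a₁ + a₂, b⁆ c = C ⁅a₁, b⁆ c + C ⁅a₂, b⁆ c := by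
    intro a₁ a₂ b c
    have e : ⁅a₁ + a₂, b⁆ = ⁅a₁, b⁆ + ⁅a₂, b⁆ := add_lie a₁ a₂ b
    rw [e, map_add, LinearMap.add_apply]
  have ha2 : ∀ a b c₁ c₂ : LaurentPolynomial K ⊗[K] 𝔤,
      C ⁅a, b⁆ (c₁ + c₂) = C ⁅a, b⁆ c₁ + C ⁅a, b⁆ c₂ := by
    intro a b c₁ c₂; rw [map_add]
  have ha3 : ∀ a b₁ b₂ c : LaurentPolynomial K ⊗[K] 𝔤,
      C ⁅a, b₁ + b₂⁆ c = C ⁅a, b₁⁆ c + C ⁅a, b₂⁆ c := by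
    intro a b₁ b₂ c
    have e : ⁅a, b₁ + b₂⁆ = ⁅a, b₁⁆ + ⁅a, b₂⁆ := lie_add a b₁ b₂
    rw [e, map_add, LinearMap.add_apply]
  have hcoc : ∀ u v w : LaurentPolynomial K ⊗[K] 𝔤,
      C ⁅u, v⁆ w + C ⁅v, w⁆ u + C ⁅w, u⁆ v = 0 := by
    intro u v w
    induction u using TensorProduct.induction_on with
    | zero => rw [hz1, hz2, hz3]; ring
    | add u₁ u₂ h₁ h₂ =>
      rw [ha1, ha2, ha3]
      linear_combination h₁ + h₂
    | tmul f x =>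
      induction v using TensorProduct.induction_on with
      | zero => rw [hz3, hz1, hz2]; ring
      | add v₁ v₂ h₁ h₂ =>
        rw [ha3, ha1, ha2]
        linear_combination h₁ + h₂
      | tmul g y =>
        induction w using TensorProduct.induction_on with
        | zero => rw [hz2, hz3, hz1]; ring
        | add w₁ w₂ h₁ h₂ =>
          rw [ha2, ha3, ha1]
          linear_combination h₁ + h₂
        | tmul h z =>
          have hbr : ∀ (f g : LaurentPolynomial K) (x y : 𝔤),
              (⁅f ⊗ₜ[K] x, g ⊗ₜ[K] y⁆ : LaurentPolynomial K ⊗[K] 𝔤)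
                = (f * g) ⊗ₜ[K] ⁅x, y⁆ := fun _ _ _ _ => rfl
          rw [hbr, hbr, hbr, hCtmul, hCtmul, hCtmul]
          have ha : κ ⁅y, z⁆ x = κ ⁅x, y⁆ z := by
            rw [hsymm, hinv]
          have hb : κ ⁅z, x⁆ y = κ ⁅x, y⁆ z := by
            rw [hinv, hsymm]
          rw [ha, hb]
          have := resPairing_cyclic f g h
          linear_combination κ ⁅x, y⁆ z * this
  have hjac : ∀ a b c : LaurentPolynomial K ⊗[K] 𝔤,
      ⁅⁅a, b⁆, c⁆ + ⁅⁅b, c⁆, a⁆ + ⁅⁅c, a⁆, b⁆ = 0 := by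
    intro a b c
    have e1 : ⁅⁅a, b⁆, c⁆ = -⁅c, ⁅a, b⁆⁆ := (lie_skew ⁅a, b⁆ c).symm
    have e2 : ⁅⁅b, c⁆, a⁆ = -⁅a, ⁅b, c⁆⁆ := (lie_skew ⁅b, c⁆ a).symm
    have e3 : ⁅⁅c, a⁆, b⁆ = -⁅b, ⁅c, a⁆⁆ := (lie_skew ⁅c, a⁆ b).symm
    rw [e1, e2, e3, ← neg_add, ← neg_add, neg_eq_zero]
    exact lie_jacobi c a b
  refine ⟨?_, ?_, ?_⟩
  · intro f g x y s t
    rw [affineBracket]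
    refine Prod.ext rfl ?_
    show C (f ⊗ₜ[K] x) (g ⊗ₜ[K] y) = _
    rw [hCtmul, resPairing_apply, lpDeriv_eq_lpDerivL]
    rfl
  · intro p
    rw [affineBracket]
    refine Prod.ext (lie_self p.1) (hCalt p.1)
  · intro p q r
    simp only [affineBracket]
    refine Prod.ext ?_ ?_
    · exact hjac p.1 q.1 r.1
    · exact hcoc p.1 q.1 r.1
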